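/- Let λ ≥ 3 be an integer divisible by 3 and let X be a λ-normed plane with norm N. Let x₁, x₂, x₃ ∈ ℝ² be three points not lying on one straight line, such that all Euclidean angles of the triangle x₁x₂x₃ are less than 120°, and let p be the Torricelli point of this triangle (the point for which the Euclidean angles ∠x₁px₂, ∠x₂px₃, ∠x₁px₃ all equal 120°). Write x̂ᵢ = (xᵢ − p)/N(xᵢ − p). If none of x̂₁, x̂₂, x̂₃ coincides with a vertex of the regular 2λ-gon that is the unit ball of N, then ft(x₁, x₂, x₃) (with respect to N) is a non-degenerate convex polygon (a compact convex set with nonempty interior); if the x̂ᵢ coincide with vertices of the 2λ-gon, then ft(x₁, x₂, x₃) = {p}. -/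

import Mathlib

open Real

/-- The vertices of a regular 2λ-gon centered at the origin, with circumradius r and
initial angle θ. -/
noncomputable def polyVerts (lam : ℕ) (r θ : ℝ) : Fin (2 * lam) → ℝ × ℝ :=
  fun k => (r * Real.cos (θ + (k : ℕ) * π / lam), r * Real.sin (θ + (k : ℕ) * π / lam))

/-- N : ℝ² → ℝ is a norm. -/
def IsNormOn (N : ℝ × ℝ → ℝ) : Prop :=
  (∀ x y : ℝ × ℝ, N (x + y) ≤ N x + N y) ∧
  (∀ (c : ℝ) (x : ℝ × ℝ), N (c • x) = |c| * N x) ∧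
  (∀ x : ℝ × ℝ, N x = 0 → x = 0)

/-- N is a λ-plane norm: a norm on ℝ² whose closed unit ball is a regular 2λ-gon
centered at the origin. -/
def IsLambdaNorm (lam : ℕ) (N : ℝ × ℝ → ℝ) : Prop :=
  IsNormOn N ∧ ∃ r > (0 : ℝ), ∃ θ : ℝ,
    {x : ℝ × ℝ | N x ≤ 1} = convexHull ℝ (Set.range (polyVerts lam r θ))

/-- φ is a norming functional for x with respect to the norm N: the dual norm of φ is
at most one (‖φ‖ ≤ 1, which together with φ x = N x = 1 for the unit vectors considered
gives ‖φ‖ = 1) and φ x = N x. -/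
def IsNormingN (N : ℝ × ℝ → ℝ) (φ : (ℝ × ℝ) →ₗ[ℝ] ℝ) (x : ℝ × ℝ) : Prop :=
  (∀ y : ℝ × ℝ, |φ y| ≤ N y) ∧ φ x = N x

/-- A unit vector (w.r.t. N) of the first type: an interior point of a flattening of the
unit circle of N. -/
def FirstTypeN (N : ℝ × ℝ → ℝ) (x : ℝ × ℝ) : Prop :=
  N x = 1 ∧ ∃ u v : ℝ × ℝ, u ≠ v ∧ N u = 1 ∧ N v = 1 ∧
    x ∈ openSegment ℝ u v ∧ ∀ z ∈ segment ℝ u v, N z = 1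

/-- A unit vector (w.r.t. N) of the zero type: not of the first type. -/
def ZeroTypeN (N : ℝ × ℝ → ℝ) (x : ℝ × ℝ) : Prop :=
  N x = 1 ∧ ¬ FirstTypeN N x

/-- The Fermat–Torricelli set of a finite tuple of points of ℝ² with respect to the
norm N. -/
def ftSetN (N : ℝ × ℝ → ℝ) {n : ℕ} (x : Fin n → ℝ × ℝ) : Set (ℝ × ℝ) :=
  {p | ∀ q : ℝ × ℝ, ∑ i, N (p - x i) ≤ ∑ i, N (q - x i)}

/-- The Euclidean angle between two vectors of ℝ² (with respect to the standard inner
product on ℝ²). -/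
noncomputable def eangle (u v : ℝ × ℝ) : ℝ :=
  Real.arccos ((u.1 * v.1 + u.2 * v.2) /
    (Real.sqrt (u.1 ^ 2 + u.2 ^ 2) * Real.sqrt (v.1 ^ 2 + v.2 ^ 2)))

namespace FTwork

noncomputable def W (lam : ℕ) (r θ : ℝ) (k : ℤ) : ℝ × ℝ :=
  (r * Real.cos (θ + (k : ℝ) * π / lam), r * Real.sin (θ + (k : ℝ) * π / lam))

section basic
variable {lam : ℕ} (hlam : 3 ≤ lam) {r θ : ℝ}

lemma lam_pos (hlam : 3 ≤ lam) : 0 < (lam : ℝ) := by positivity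

lemma W_period (hlam : 3 ≤ lam) (r θ : ℝ) (k t : ℤ) :
    W lam r θ (k + 2 * lam * t) = W lam r θ k := by
  have hl : (lam:ℝ) ≠ 0 := ne_of_gt (lam_pos hlam)
  have h : θ + ((k : ℝ) + 2*(lam:ℝ)*(t:ℝ)) * π / lam = θ + (k:ℝ) * π / lam + (t:ℝ) * (2*π) := by
    field_simp; ring
  unfold W
  push_cast
  rw [h, Real.cos_add_int_mul_two_pi, Real.sin_add_int_mul_two_pi]

lemma range_polyVerts_eq (hlam : 3 ≤ lam) (r θ : ℝ) :
    Set.range (polyVerts lam r θ) = Set.range (W lam r θ) := by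
  apply Set.eq_of_subset_of_subset
  · rintro _ ⟨k, rfl⟩
    refine ⟨(k : ℕ), ?_⟩
    unfold W polyVerts
    push_cast
    rfl
  · rintro _ ⟨k, rfl⟩
    have h2 : (0:ℤ) < 2 * lam := by positivity
    have hmod : k % (2*lam) + 2 * lam * (k / (2*lam)) = k := Int.emod_add_mul_ediv k (2*lam)
    have hm0 : 0 ≤ k % (2*lam) := Int.emod_nonneg k (ne_of_gt h2)
    have hmlt : k % (2*lam) < 2*lam := Int.emod_lt_of_pos k h2
    set m := (k % (2*lam)).toNat with hmdef
    have hmnat : (m : ℤ) = k % (2*lam) := Int.toNat_of_nonneg hm0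
    have hmlt' : m < 2 * lam := by omega
    refine ⟨⟨m, hmlt'⟩, ?_⟩
    have : W lam r θ k = W lam r θ (m : ℤ) := by
      rw [← W_period hlam r θ (m:ℤ) (k / (2*lam))]
      congr 1
      push_cast
      omega
    rw [this]
    unfold W polyVerts
    push_cast
    rfl

end basic

section normbasic
variable {N : ℝ × ℝ → ℝ} (hN : IsNormOn N)

lemma N_zero (hN : IsNormOn N) : N 0 = 0 := by
  have := hN.2.1 0 0
  simpa using this

lemma N_neg (hN : IsNormOn N) (x : ℝ × ℝ) : N (-x) = N x := by
  have := hN.2.1 (-1) x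
  simpa using this

lemma N_nonneg (hN : IsNormOn N) (x : ℝ × ℝ) : 0 ≤ N x := by
  have h := hN.1 x (-x)
  rw [add_neg_cancel, N_zero hN, N_neg hN] at h
  linarith

lemma N_pos (hN : IsNormOn N) {x : ℝ × ℝ} (hx : x ≠ 0) : 0 < N x :=
  lt_of_le_of_ne (N_nonneg hN x) (fun h => hx (hN.2.2 x h.symm))

lemma N_smul_nonneg (hN : IsNormOn N) {c : ℝ} (hc : 0 ≤ c) (x : ℝ × ℝ) :
    N (c • x) = c * N x := by
  rw [hN.2.1, abs_of_nonneg hc]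

lemma N_sub_comm (hN : IsNormOn N) (x y : ℝ × ℝ) : N (x - y) = N (y - x) := by
  rw [← N_neg hN (x - y), neg_sub]

end normbasic


section trig
variable {lam : ℕ}

lemma cos_reduce (hlam : 3 ≤ lam) (m : ℤ) (x : ℝ) :
    ∃ m₀ : ℕ, m₀ < 2*lam ∧ ((m:ℝ)*π/lam + x) = ((m₀:ℝ)*π/lam + x + (m/(2*lam) : ℤ) * (2*π)) := by
  have hl : (lam:ℝ) ≠ 0 := by positivity
  have h2 : (0:ℤ) < 2 * lam := by positivity
  have hmod := Int.emod_add_mul_ediv m (2*lam)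
  have hm0 : 0 ≤ m % (2*lam) := Int.emod_nonneg m (ne_of_gt h2)
  have hmlt : m % (2*lam) < 2*lam := Int.emod_lt_of_pos m h2
  refine ⟨(m % (2*lam)).toNat, by omega, ?_⟩
  have hcast : ((m:ℝ)) = ((m % (2*lam)).toNat : ℝ) + 2*(lam:ℝ)*((m/(2*lam) : ℤ):ℝ) := by
    have h3 : ((m % (2*lam)).toNat : ℤ) = m % (2*lam) := Int.toNat_of_nonneg hm0
    have h4 : m = ((m % (2*lam)).toNat : ℤ) + 2*(lam:ℤ)*(m/(2*lam)) := by omega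
    exact_mod_cast congrArg (Int.cast : ℤ → ℝ) h4
  rw [hcast]; field_simp; ring

lemma cos_edge_bound (hlam : 3 ≤ lam) (m : ℤ) :
    Real.cos ((m:ℝ)*π/lam - π/(2*lam)) ≤ Real.cos (π/(2*lam)) := by
  have hl : (0:ℝ) < (lam:ℝ) := by positivity
  obtain ⟨m₀, hm₀, heq⟩ := cos_reduce hlam m (-(π/(2*lam)))
  have h1 : (m:ℝ)*π/lam - π/(2*lam) = (m:ℝ)*π/lam + (-(π/(2*lam))) := by ring
  rw [h1, heq, Real.cos_add_int_mul_two_pi]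
  set c := π/(2*lam) with hc
  have hcpos : 0 < c := by positivity
  have harg : (m₀:ℝ)*π/lam + (-c) = (2*(m₀:ℝ) - 1) * c := by
    rw [hc]; field_simp; ring
  rw [harg]
  rcases Nat.lt_or_ge m₀ 2 with h | h
  · interval_cases m₀
    · rw [show (2*(0:ℕ):ℝ) - 1 = -1 by norm_num]
      rw [show ((-1:ℝ)) * c = -c by ring, Real.cos_neg]
    · rw [show ((2*(1:ℕ):ℝ) - 1) * c = c by push_cast; ring]
  · have key : Real.cos ((2*(m₀:ℝ) - 1) * c) - Real.cos c =
        -2 * Real.sin ((m₀:ℝ) * c) * Real.sin (((m₀:ℝ) - 1) * c) := by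
      rw [Real.cos_sub_cos]; congr 2 <;> ring
    have hml : (m₀:ℝ) < 2*lam := by exact_mod_cast hm₀
    have hs1 : 0 < Real.sin ((m₀:ℝ) * c) := by
      apply Real.sin_pos_of_pos_of_lt_pi
      · have : (2:ℝ) ≤ (m₀:ℝ) := by exact_mod_cast h
        positivity
      · rw [hc, mul_div_assoc']
        rw [div_lt_iff₀ (by positivity)]
        nlinarith [Real.pi_pos]
    have hs2 : 0 < Real.sin (((m₀:ℝ) - 1) * c) := by
      apply Real.sin_pos_of_pos_of_lt_pi
      · have : (2:ℝ) ≤ (m₀:ℝ) := by exact_mod_cast h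
        nlinarith [hcpos]
      · rw [hc, mul_div_assoc']
        rw [div_lt_iff₀ (by positivity)]
        nlinarith [Real.pi_pos]
    nlinarith

lemma cos_vertex_eq (hlam : 3 ≤ lam) (m : ℤ) (h : Real.cos ((m:ℝ)*π/lam) = 1) :
    ∃ n : ℤ, m = 2*lam*n := by
  rw [Real.cos_eq_one_iff] at h
  obtain ⟨n, hn⟩ := h
  refine ⟨n, ?_⟩
  have hl : (0:ℝ) < (lam:ℝ) := by positivity
  have hπ := Real.pi_ne_zero
  have : (m:ℝ) = 2*(lam:ℝ)*n := by
    field_simp at hn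
    have hπ2 : (0:ℝ) < π := Real.pi_pos
    nlinarith [hn]
  exact_mod_cast this


end trig

section functionals

noncomputable def lfun (c s d : ℝ) : (ℝ × ℝ) →ₗ[ℝ] ℝ where
  toFun y := (y.1 * c + y.2 * s) / d
  map_add' x y := by simp only [Prod.fst_add, Prod.snd_add]; ring
  map_smul' t x := by simp only [Prod.smul_fst, Prod.smul_snd, smul_eq_mul,
    RingHom.id_apply]; ring

lemma lfun_apply (c s d : ℝ) (y : ℝ × ℝ) : lfun c s d y = (y.1 * c + y.2 * s) / d := rfl

noncomputable def psiF (lam : ℕ) (r θ : ℝ) (k : ℤ) : (ℝ × ℝ) →ₗ[ℝ] ℝ :=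
  lfun (Real.cos (θ + k*π/lam + π/(2*lam))) (Real.sin (θ + k*π/lam + π/(2*lam)))
    (r * Real.cos (π/(2*lam)))

noncomputable def phiF (lam : ℕ) (r θ : ℝ) (k : ℤ) : (ℝ × ℝ) →ₗ[ℝ] ℝ :=
  lfun (Real.cos (θ + k*π/lam)) (Real.sin (θ + k*π/lam)) r

variable {lam : ℕ} {r θ : ℝ}

lemma cosc_pos (hlam : 3 ≤ lam) : 0 < Real.cos (π/(2*lam)) := by
  have hl : (0:ℝ) < (lam:ℝ) := by positivity
  apply Real.cos_pos_of_mem_Ioo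
  constructor
  · have : (0:ℝ) < π/(2*lam) := by positivity
    linarith [Real.pi_pos]
  · rw [div_lt_div_iff₀ (by positivity) (by norm_num)]
    have h3 : (3:ℝ) ≤ (lam:ℝ) := by exact_mod_cast hlam
    nlinarith [Real.pi_pos]

lemma psiF_W (hlam : 3 ≤ lam) (hr : 0 < r) (k j : ℤ) :
    psiF lam r θ k (W lam r θ j) =
      Real.cos (((j:ℝ) - k)*π/lam - π/(2*lam)) / Real.cos (π/(2*lam)) := by
  have hl : (0:ℝ) < (lam:ℝ) := by positivity
  rw [psiF, lfun_apply, W]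
  have : (r * Real.cos (θ + (j:ℝ)*π/lam)) * Real.cos (θ + k*π/lam + π/(2*lam)) +
      (r * Real.sin (θ + (j:ℝ)*π/lam)) * Real.sin (θ + k*π/lam + π/(2*lam)) =
      r * Real.cos ((θ + (j:ℝ)*π/lam) - (θ + k*π/lam + π/(2*lam))) := by
    rw [Real.cos_sub]; ring
  rw [this]
  have harg : (θ + (j:ℝ)*π/lam) - (θ + k*π/lam + π/(2*lam)) =
      ((j:ℝ) - k)*π/lam - π/(2*lam) := by ring
  rw [harg, mul_div_mul_left _ _ (ne_of_gt hr)]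

lemma psiF_W_le_one (hlam : 3 ≤ lam) (hr : 0 < r) (k j : ℤ) :
    psiF lam r θ k (W lam r θ j) ≤ 1 := by
  rw [psiF_W hlam hr, div_le_one (cosc_pos hlam)]
  have := cos_edge_bound hlam (j - k)
  push_cast at this
  exact this

lemma psiF_W_self (hlam : 3 ≤ lam) (hr : 0 < r) (k : ℤ) :
    psiF lam r θ k (W lam r θ k) = 1 := by
  rw [psiF_W hlam hr]
  rw [show ((k:ℝ) - k)*π/lam - π/(2*lam) = -(π/(2*lam)) by ring, Real.cos_neg]
  exact div_self (ne_of_gt (cosc_pos hlam))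

lemma psiF_W_succ (hlam : 3 ≤ lam) (hr : 0 < r) (k : ℤ) :
    psiF lam r θ k (W lam r θ (k+1)) = 1 := by
  have hl : (0:ℝ) < (lam:ℝ) := by positivity
  rw [psiF_W hlam hr]
  push_cast
  rw [show ((k:ℝ) + 1 - k)*π/lam - π/(2*lam) = π/(2*lam) by field_simp; ring]
  exact div_self (ne_of_gt (cosc_pos hlam))

lemma phiF_W (hlam : 3 ≤ lam) (hr : 0 < r) (k j : ℤ) :
    phiF lam r θ k (W lam r θ j) = Real.cos (((j:ℝ) - k)*π/lam) := by
  have hl : (0:ℝ) < (lam:ℝ) := by positivity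
  rw [phiF, lfun_apply, W]
  have : (r * Real.cos (θ + (j:ℝ)*π/lam)) * Real.cos (θ + k*π/lam) +
      (r * Real.sin (θ + (j:ℝ)*π/lam)) * Real.sin (θ + k*π/lam) =
      r * Real.cos ((θ + (j:ℝ)*π/lam) - (θ + k*π/lam)) := by
    rw [Real.cos_sub]; ring
  rw [this, show (θ + (j:ℝ)*π/lam) - (θ + k*π/lam) = ((j:ℝ) - k)*π/lam by ring]
  have hr' : r ≠ 0 := ne_of_gt hr
  field_simp

lemma phiF_W_le_one (hlam : 3 ≤ lam) (hr : 0 < r) (k j : ℤ) :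
    phiF lam r θ k (W lam r θ j) ≤ 1 := by
  rw [phiF_W hlam hr]; exact Real.cos_le_one _

lemma phiF_W_self (hlam : 3 ≤ lam) (hr : 0 < r) (k : ℤ) :
    phiF lam r θ k (W lam r θ k) = 1 := by
  rw [phiF_W hlam hr]
  rw [show ((k:ℝ) - k)*π/lam = 0 by ring, Real.cos_zero]

lemma phiF_W_eq_one (hlam : 3 ≤ lam) (hr : 0 < r) {k j : ℤ}
    (h : phiF lam r θ k (W lam r θ j) = 1) : W lam r θ j = W lam r θ k := by
  rw [phiF_W hlam hr] at h
  have h' : Real.cos (((j - k : ℤ):ℝ)*π/lam) = 1 := by push_cast; exact h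
  obtain ⟨n, hn⟩ := cos_vertex_eq hlam _ h'
  have : j = k + 2*lam*n := by omega
  rw [this, W_period hlam]

end functionals

section normball
variable {lam : ℕ} {r θ : ℝ} {N : ℝ × ℝ → ℝ}

/-- membership in ball iff in hull -/
lemma N_W_le_one (hlam : 3 ≤ lam) (hN : IsNormOn N)
    (hball : {x : ℝ × ℝ | N x ≤ 1} = convexHull ℝ (Set.range (polyVerts lam r θ)))
    (j : ℤ) : N (W lam r θ j) ≤ 1 := by
  have : W lam r θ j ∈ Set.range (polyVerts lam r θ) := by
    rw [range_polyVerts_eq hlam]; exact ⟨j, rfl⟩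
  have h2 : W lam r θ j ∈ convexHull ℝ (Set.range (polyVerts lam r θ)) :=
    subset_convexHull ℝ _ this
  rw [← hball] at h2; exact h2

lemma le_one_on_ball (hlam : 3 ≤ lam) (hN : IsNormOn N)
    (hball : {x : ℝ × ℝ | N x ≤ 1} = convexHull ℝ (Set.range (polyVerts lam r θ)))
    (L : (ℝ × ℝ) →ₗ[ℝ] ℝ) (hvert : ∀ j : ℤ, L (W lam r θ j) ≤ 1) :
    ∀ y : ℝ × ℝ, N y ≤ 1 → L y ≤ 1 := by
  intro y hy
  have hmem : y ∈ convexHull ℝ (Set.range (polyVerts lam r θ)) := by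
    rw [← hball]; exact hy
  have hsub : convexHull ℝ (Set.range (polyVerts lam r θ)) ⊆ {w : ℝ × ℝ | L w ≤ 1} := by
    apply convexHull_min
    · rintro _ ⟨j, rfl⟩
      have : polyVerts lam r θ j ∈ Set.range (W lam r θ) := by
        rw [← range_polyVerts_eq hlam]; exact ⟨j, rfl⟩
      obtain ⟨k, hk⟩ := this
      rw [← hk]; exact hvert k
    · exact convex_halfSpace_le L.isLinear 1
  exact hsub hmem

lemma abs_le_N (hN : IsNormOn N) (L : (ℝ × ℝ) →ₗ[ℝ] ℝ)
    (hle : ∀ y : ℝ × ℝ, N y ≤ 1 → L y ≤ 1) :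
    ∀ y : ℝ × ℝ, |L y| ≤ N y := by
  intro y
  rcases eq_or_ne y 0 with rfl | hy
  · simp [N_zero hN]
  · have hpos : 0 < N y := N_pos hN hy
    have key : ∀ z : ℝ × ℝ, z ≠ 0 → L z ≤ N z := by
      intro z hz
      have hposz : 0 < N z := N_pos hN hz
      have h1 : N ((N z)⁻¹ • z) ≤ 1 := by
        rw [N_smul_nonneg hN (by positivity)]
        rw [inv_mul_cancel₀ (ne_of_gt hposz)]
      have h2 := hle _ h1
      rw [map_smul, smul_eq_mul] at h2
      calc L z = N z * ((N z)⁻¹ * L z) := by field_simp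
        _ ≤ N z * 1 := by
            apply mul_le_mul_of_nonneg_left h2 (le_of_lt hposz)
        _ = N z := mul_one _
    rw [abs_le]
    constructor
    · have := key (-y) (by simpa using hy)
      rw [map_neg, N_neg hN] at this
      linarith
    · exact key y hy

lemma N_cone (hlam : 3 ≤ lam) (hr : 0 < r) (hN : IsNormOn N)
    (hball : {x : ℝ × ℝ | N x ≤ 1} = convexHull ℝ (Set.range (polyVerts lam r θ)))
    (k : ℤ) {a b : ℝ} (ha : 0 ≤ a) (hb : 0 ≤ b) :
    N (a • W lam r θ k + b • W lam r θ (k+1)) = a + b := by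
  have hub : N (a • W lam r θ k + b • W lam r θ (k+1)) ≤ a + b := by
    calc N (a • W lam r θ k + b • W lam r θ (k+1)) ≤
        N (a • W lam r θ k) + N (b • W lam r θ (k+1)) := hN.1 _ _
      _ = a * N (W lam r θ k) + b * N (W lam r θ (k+1)) := by
          rw [N_smul_nonneg hN ha, N_smul_nonneg hN hb]
      _ ≤ a * 1 + b * 1 := by
          have h1 := N_W_le_one hlam hN hball k
          have h2 := N_W_le_one hlam hN hball (k+1)
          gcongr <;> assumption
      _ = a + b := by ring
  have hlb : a + b ≤ N (a • W lam r θ k + b • W lam r θ (k+1)) := by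
    have habs := abs_le_N hN (psiF lam r θ k)
      (le_one_on_ball hlam hN hball _ (psiF_W_le_one hlam hr k))
      (a • W lam r θ k + b • W lam r θ (k+1))
    have hval : psiF lam r θ k (a • W lam r θ k + b • W lam r θ (k+1)) = a + b := by
      rw [map_add, map_smul, map_smul, psiF_W_self hlam hr, psiF_W_succ hlam hr,
        smul_eq_mul, smul_eq_mul, mul_one, mul_one]
    rw [hval] at habs
    exact le_trans (le_abs_self _) habs
  linarith

lemma N_W (hlam : 3 ≤ lam) (hr : 0 < r) (hN : IsNormOn N)
    (hball : {x : ℝ × ℝ | N x ≤ 1} = convexHull ℝ (Set.range (polyVerts lam r θ)))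
    (k : ℤ) : N (W lam r θ k) = 1 := by
  have := N_cone hlam hr hN hball k (a := 1) (b := 0) (by norm_num) (le_refl 0)
  simpa using this

end normball

section exposed
variable {lam : ℕ} {r θ : ℝ} {N : ℝ × ℝ → ℝ}

lemma vertex_exposed (hlam : 3 ≤ lam) (hr : 0 < r) (hN : IsNormOn N)
    (hball : {x : ℝ × ℝ | N x ≤ 1} = convexHull ℝ (Set.range (polyVerts lam r θ)))
    (k : ℤ) {y : ℝ × ℝ} (hy : N y ≤ 1) (h1 : phiF lam r θ k y = 1) :
    y = W lam r θ k := by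
  have hfin : (Set.range (polyVerts lam r θ)).Finite := Set.finite_range _
  have hmem : y ∈ convexHull ℝ (Set.range (polyVerts lam r θ)) := by rw [← hball]; exact hy
  rw [hfin.convexHull_eq] at hmem
  obtain ⟨w, hw0, hw1, hwy⟩ := hmem
  set T := hfin.toFinset with hT
  have hTW : ∀ v ∈ T, ∃ j : ℤ, v = W lam r θ j := by
    intro v hv
    have hv' : v ∈ Set.range (polyVerts lam r θ) := hfin.mem_toFinset.mp hv
    rw [range_polyVerts_eq hlam] at hv'
    obtain ⟨j, hj⟩ := hv'; exact ⟨j, hj.symm⟩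
  have hy' : y = ∑ v ∈ T, w v • v := by
    rw [← hwy, Finset.centerMass_eq_of_sum_1 T id hw1]; simp
  have hphi : ∑ v ∈ T, w v * phiF lam r θ k v = 1 := by
    rw [← h1, hy', map_sum]
    apply Finset.sum_congr rfl
    intro v hv
    rw [map_smul, smul_eq_mul]
  have hzero : ∑ v ∈ T, w v * (1 - phiF lam r θ k v) = 0 := by
    have hsplit : ∑ v ∈ T, w v * (1 - phiF lam r θ k v)
        = (∑ v ∈ T, w v) - ∑ v ∈ T, w v * phiF lam r θ k v := by
      rw [← Finset.sum_sub_distrib]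
      apply Finset.sum_congr rfl
      intros; ring
    rw [hsplit, hw1, hphi]; ring
  have hnn : ∀ v ∈ T, 0 ≤ w v * (1 - phiF lam r θ k v) := by
    intro v hv
    apply mul_nonneg (hw0 v (hfin.mem_toFinset.mp hv))
    obtain ⟨j, rfl⟩ := hTW v hv
    linarith [phiF_W_le_one (θ := θ) hlam hr k j]
  have hterm := (Finset.sum_eq_zero_iff_of_nonneg hnn).mp hzero
  have hconst : ∀ v ∈ T, w v • v = w v • W lam r θ k := by
    intro v hv
    rcases eq_or_ne (w v) 0 with h | h
    · rw [h]; simp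
    · have h2 := hterm v hv
      have h3 : phiF lam r θ k v = 1 := by
        rcases mul_eq_zero.mp h2 with h' | h'
        · exact absurd h' h
        · linarith
      obtain ⟨j, rfl⟩ := hTW v hv
      rw [phiF_W_eq_one hlam hr h3]
  rw [hy', Finset.sum_congr rfl hconst, ← Finset.sum_smul, hw1, one_smul]

lemma vertex_ray (hlam : 3 ≤ lam) (hr : 0 < r) (hN : IsNormOn N)
    (hball : {x : ℝ × ℝ | N x ≤ 1} = convexHull ℝ (Set.range (polyVerts lam r θ)))
    (k : ℤ) {v : ℝ × ℝ} (h : phiF lam r θ k v = N v) :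
    v = (N v) • W lam r θ k := by
  rcases eq_or_ne v 0 with rfl | hv
  · simp [N_zero hN]
  · have hp : 0 < N v := N_pos hN hv
    have h1 : phiF lam r θ k ((N v)⁻¹ • v) = 1 := by
      rw [map_smul, smul_eq_mul, h]; field_simp
    have h2 : N ((N v)⁻¹ • v) ≤ 1 := by
      rw [N_smul_nonneg hN (by positivity), inv_mul_cancel₀ hp.ne']
    have h3 := vertex_exposed hlam hr hN hball k h2 h1
    calc v = (N v) • ((N v)⁻¹ • v) := by rw [smul_smul]; field_simp; rw [one_smul]
      _ = (N v) • W lam r θ k := by rw [h3]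

end exposed

section decomp
variable {lam : ℕ} {r θ : ℝ}

lemma tri1 (β δ α : ℝ) : Real.sin (β+δ-α)*Real.cos β + Real.sin (α-β)*Real.cos (β+δ)
    = Real.sin δ * Real.cos α := by
  rw [show β+δ-α = (β+δ)-α by ring, Real.sin_sub, Real.sin_sub, Real.sin_add, Real.cos_add]
  linear_combination (Real.sin_sq_add_cos_sq β) * (Real.sin δ * Real.cos α)

lemma tri2 (β δ α : ℝ) : Real.sin (β+δ-α)*Real.sin β + Real.sin (α-β)*Real.sin (β+δ)
    = Real.sin δ * Real.sin α := by
  rw [show β+δ-α = (β+δ)-α by ring, Real.sin_sub, Real.sin_sub, Real.sin_add, Real.cos_add]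
  linear_combination (Real.sin_sq_add_cos_sq β) * (Real.sin δ * Real.sin α)

lemma decomp (hlam : 3 ≤ lam) (hr : 0 < r) {z : ℝ × ℝ} (hz : z ≠ 0) :
    ∃ (k : ℤ) (a b : ℝ), 0 ≤ a ∧ 0 ≤ b ∧
      z = a • W lam r θ k + b • W lam r θ (k+1) := by
  have hl : (0:ℝ) < (lam:ℝ) := by positivity
  have hl3 : (3:ℝ) ≤ (lam:ℝ) := by exact_mod_cast hlam
  have hπ := Real.pi_pos
  obtain ⟨ρ, α, hρ, hz1, hz2⟩ : ∃ ρ α : ℝ, 0 < ρ ∧ z.1 = ρ * Real.cos α ∧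
      z.2 = ρ * Real.sin α := by
    have hc0 : (⟨z.1, z.2⟩ : ℂ) ≠ 0 := by
      intro h
      apply hz
      have h1 : (⟨z.1, z.2⟩ : ℂ).re = 0 := by rw [h]; rfl
      have h2 : (⟨z.1, z.2⟩ : ℂ).im = 0 := by rw [h]; rfl
      exact Prod.ext h1 h2
    refine ⟨‖(⟨z.1, z.2⟩ : ℂ)‖, Complex.arg ⟨z.1, z.2⟩, norm_pos_iff.mpr hc0, ?_, ?_⟩
    · rw [Complex.cos_arg hc0]
      have : ‖(⟨z.1, z.2⟩ : ℂ)‖ ≠ 0 := ne_of_gt (norm_pos_iff.mpr hc0)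
      field_simp
    · rw [Complex.sin_arg]
      have : ‖(⟨z.1, z.2⟩ : ℂ)‖ ≠ 0 := ne_of_gt (norm_pos_iff.mpr hc0)
      field_simp
  set k : ℤ := ⌊(α - θ) * lam / π⌋ with hkdef
  have hk1 : (k:ℝ) ≤ (α - θ) * lam / π := Int.floor_le _
  have hk2 : (α - θ) * lam / π < (k:ℝ) + 1 := Int.lt_floor_add_one _
  clear_value k
  obtain ⟨δ, hδdef⟩ : ∃ δ : ℝ, δ = π / lam := ⟨_, rfl⟩
  obtain ⟨β, hβdef⟩ : ∃ β : ℝ, β = θ + (k:ℝ) * π / lam := ⟨_, rfl⟩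
  have hδpos : 0 < δ := by rw [hδdef]; positivity
  have hδlt : δ < π := by
    rw [hδdef, div_lt_iff₀ hl]
    nlinarith
  have hβα : β ≤ α := by
    rw [hβdef]
    rw [le_div_iff₀ hπ] at hk1
    have : (k:ℝ) * π / lam ≤ α - θ := by
      rw [div_le_iff₀ hl]
      nlinarith
    linarith
  have hαβδ : α < β + δ := by
    rw [hβdef, hδdef]
    rw [div_lt_iff₀ hπ] at hk2
    have h5 : α - θ < ((k:ℝ) + 1) * π / lam := by
      rw [lt_div_iff₀ hl]
      nlinarith
    have hexp : ((k:ℝ) + 1) * π / lam = (k:ℝ)*π/lam + π/lam := by field_simp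
    rw [hexp] at h5
    linarith
  have hsδ : 0 < Real.sin δ := Real.sin_pos_of_pos_of_lt_pi hδpos hδlt
  obtain ⟨a, hadef⟩ : ∃ a : ℝ, a = ρ * Real.sin (β + δ - α) / (r * Real.sin δ) := ⟨_, rfl⟩
  obtain ⟨b, hbdef⟩ : ∃ b : ℝ, b = ρ * Real.sin (α - β) / (r * Real.sin δ) := ⟨_, rfl⟩
  have ha : 0 ≤ a := by
    rw [hadef]
    apply div_nonneg _ (by positivity)
    apply mul_nonneg (le_of_lt hρ)
    apply Real.sin_nonneg_of_nonneg_of_le_pi <;> [linarith; linarith]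
  have hb : 0 ≤ b := by
    rw [hbdef]
    apply div_nonneg _ (by positivity)
    apply mul_nonneg (le_of_lt hρ)
    apply Real.sin_nonneg_of_nonneg_of_le_pi <;> [linarith; linarith]
  refine ⟨k, a, b, ha, hb, ?_⟩
  have hWk : W lam r θ k = (r * Real.cos β, r * Real.sin β) := by
    rw [hβdef]; rfl
  have hangle : θ + ((k:ℝ)+1)*π/lam = β + δ := by
    rw [hβdef, hδdef]; field_simp; ring
  have hW1 : W lam r θ (k+1) = (r * Real.cos (β+δ), r * Real.sin (β+δ)) := by
    unfold W
    push_cast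
    rw [hangle]
  rw [hWk, hW1]
  have hr' : r ≠ 0 := ne_of_gt hr
  have hs' : Real.sin δ ≠ 0 := ne_of_gt hsδ
  have key1 := tri1 β δ α
  have key2 := tri2 β δ α
  apply Prod.ext
  · show z.1 = a * (r * Real.cos β) + b * (r * Real.cos (β+δ))
    have step : a * (r * Real.cos β) + b * (r * Real.cos (β+δ)) =
        ρ * (Real.sin (β+δ-α)*Real.cos β + Real.sin (α-β)*Real.cos (β+δ)) / Real.sin δ := by
      rw [hadef, hbdef]; field_simp
    rw [hz1, step, key1]
    field_simp
  · show z.2 = a * (r * Real.sin β) + b * (r * Real.sin (β+δ))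
    have step : a * (r * Real.sin β) + b * (r * Real.sin (β+δ)) =
        ρ * (Real.sin (β+δ-α)*Real.sin β + Real.sin (α-β)*Real.sin (β+δ)) / Real.sin δ := by
      rw [hadef, hbdef]; field_simp
    rw [hz2, step, key2]
    field_simp

end decomp

section rotation
variable {lam : ℕ} {r θ : ℝ} {N : ℝ × ℝ → ℝ}

def rotA (cs sn : ℝ) (y : ℝ × ℝ) : ℝ × ℝ := (cs*y.1 - sn*y.2, sn*y.1 + cs*y.2)

lemma rotA_smul_add (cs sn a b : ℝ) (u v : ℝ × ℝ) :
    rotA cs sn (a • u + b • v) = a • rotA cs sn u + b • rotA cs sn v := by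
  unfold rotA
  simp only [Prod.smul_fst, Prod.smul_snd, Prod.fst_add, Prod.snd_add, Prod.smul_mk,
    Prod.mk_add_mk, smul_eq_mul, Prod.mk.injEq]
  constructor <;> ring

lemma cos_two_pi_div_three : Real.cos (2*π/3) = -(1/2) := by
  rw [show (2*π/3 : ℝ) = π - π/3 by ring, Real.cos_pi_sub, Real.cos_pi_div_three]

lemma sin_two_pi_div_three : Real.sin (2*π/3) = Real.sqrt 3/2 := by
  rw [show (2*π/3 : ℝ) = π - π/3 by ring, Real.sin_pi_sub, Real.sin_pi_div_three]

lemma mpi_angle (hlam : 3 ≤ lam) (hdvd : 3 ∣ lam) {ε : ℤ} (hε : ε = 1 ∨ ε = -1) :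
    ((ε*(2*(lam/3 : ℕ)) : ℤ) : ℝ) * π / lam = (ε:ℝ) * (2*π/3) := by
  obtain ⟨t, ht⟩ := hdvd
  have ht1 : 1 ≤ t := by omega
  have htl : lam / 3 = t := by omega
  rw [htl, ht]
  have h3 : ((3*t : ℕ) : ℝ) = 3*(t:ℝ) := by push_cast; ring
  have htne : (t:ℝ) ≠ 0 := by positivity
  push_cast
  field_simp

lemma cos_m_angle (hlam : 3 ≤ lam) (hdvd : 3 ∣ lam) {ε : ℤ} (hε : ε = 1 ∨ ε = -1) :
    Real.cos (((ε*(2*(lam/3 : ℕ)) : ℤ) : ℝ) * π / lam) = -(1/2) := by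
  rw [mpi_angle hlam hdvd hε]
  rcases hε with rfl | rfl
  · push_cast; rw [one_mul, cos_two_pi_div_three]
  · push_cast; rw [show (-1 : ℝ) * (2*π/3) = -(2*π/3) by ring, Real.cos_neg,
      cos_two_pi_div_three]

lemma sin_m_angle (hlam : 3 ≤ lam) (hdvd : 3 ∣ lam) {ε : ℤ} (hε : ε = 1 ∨ ε = -1) :
    Real.sin (((ε*(2*(lam/3 : ℕ)) : ℤ) : ℝ) * π / lam) = (ε:ℝ) * (Real.sqrt 3/2) := by
  rw [mpi_angle hlam hdvd hε]
  rcases hε with rfl | rfl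
  · push_cast; rw [one_mul, one_mul, sin_two_pi_div_three]
  · push_cast
    rw [show (-1 : ℝ) * (2*π/3) = -(2*π/3) by ring, Real.sin_neg, sin_two_pi_div_three]
    ring

lemma rot_W (hlam : 3 ≤ lam) (hdvd : 3 ∣ lam) {ε : ℤ} (hε : ε = 1 ∨ ε = -1) (j : ℤ) :
    rotA (-(1/2)) ((ε:ℝ) * (Real.sqrt 3/2)) (W lam r θ j)
      = W lam r θ (j + ε*(2*(lam/3 : ℕ))) := by
  have hl : (0:ℝ) < (lam:ℝ) := by positivity
  have hangle : θ + ((j:ℝ) + ((ε*(2*(lam/3 : ℕ)) : ℤ):ℝ)) * π / lam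
      = (θ + (j:ℝ)*π/lam) + (ε:ℝ)*(2*π/3) := by
    rw [← mpi_angle hlam hdvd hε]
    field_simp
    ring
  have hcos : Real.cos ((ε:ℝ)*(2*π/3)) = -(1/2) := by
    rcases hε with rfl | rfl
    · push_cast; rw [one_mul, cos_two_pi_div_three]
    · push_cast; rw [show (-1 : ℝ) * (2*π/3) = -(2*π/3) by ring, Real.cos_neg,
        cos_two_pi_div_three]
  have hsin : Real.sin ((ε:ℝ)*(2*π/3)) = (ε:ℝ) * (Real.sqrt 3/2) := by
    rcases hε with rfl | rfl
    · push_cast; rw [one_mul, one_mul, sin_two_pi_div_three]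
    · push_cast
      rw [show (-1 : ℝ) * (2*π/3) = -(2*π/3) by ring, Real.sin_neg, sin_two_pi_div_three]
      ring
  unfold rotA W
  push_cast at hangle ⊢
  rw [hangle]
  generalize θ + (j:ℝ)*π/(lam:ℝ) = A
  rw [Real.cos_add, Real.sin_add, hcos, hsin, Prod.mk.injEq]
  constructor <;> ring

lemma rot_N (hlam : 3 ≤ lam) (hr : 0 < r) (hN : IsNormOn N)
    (hball : {x : ℝ × ℝ | N x ≤ 1} = convexHull ℝ (Set.range (polyVerts lam r θ)))
    (hdvd : 3 ∣ lam) {ε : ℤ} (hε : ε = 1 ∨ ε = -1) (z : ℝ × ℝ) :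
    N (rotA (-(1/2)) ((ε:ℝ) * (Real.sqrt 3/2)) z) = N z := by
  rcases eq_or_ne z 0 with rfl | hz
  · have h0 : rotA (-(1/2)) ((ε:ℝ) * (Real.sqrt 3/2)) (0 : ℝ × ℝ) = 0 := by
      unfold rotA; simp
    rw [h0]
  · obtain ⟨k, a, b, ha, hb, hzd⟩ := decomp (θ := θ) hlam hr hz
    rw [hzd, rotA_smul_add, rot_W hlam hdvd hε, rot_W hlam hdvd hε]
    rw [show k + 1 + ε*(2*(lam/3 : ℕ)) = (k + ε*(2*(lam/3 : ℕ))) + 1 by ring]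
    rw [N_cone hlam hr hN hball _ ha hb, N_cone hlam hr hN hball _ ha hb]

end rotation

section angles
variable {lam : ℕ} {r θ : ℝ}

lemma normsq_pos {u : ℝ × ℝ} (hu : u ≠ 0) : 0 < u.1^2 + u.2^2 := by
  have h : u.1 ≠ 0 ∨ u.2 ≠ 0 := by
    by_contra h
    push_neg at h
    exact hu (Prod.ext h.1 h.2)
  rcases h with h | h
  · have : 0 < u.1^2 := by positivity
    nlinarith [sq_nonneg u.2]
  · have : 0 < u.2^2 := by positivity
    nlinarith [sq_nonneg u.1]

lemma eangle_ne_of_zero_left (v : ℝ × ℝ) : eangle 0 v ≠ 2*π/3 := by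
  unfold eangle
  simp only [Prod.fst_zero, Prod.snd_zero, zero_mul, add_zero, zero_add]
  rw [zero_div, Real.arccos_zero]
  intro h
  have := Real.pi_pos
  linarith

lemma eangle_ne_of_zero_right (v : ℝ × ℝ) : eangle v 0 ≠ 2*π/3 := by
  unfold eangle
  simp only [Prod.fst_zero, Prod.snd_zero, mul_zero, add_zero]
  rw [zero_div, Real.arccos_zero]
  intro h
  have := Real.pi_pos
  linarith

lemma dot_of_eangle {u v : ℝ × ℝ} (hu : u ≠ 0) (hv : v ≠ 0) (h : eangle u v = 2*π/3) :
    u.1*v.1 + u.2*v.2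
      = -(1/2) * (Real.sqrt (u.1^2+u.2^2) * Real.sqrt (v.1^2+v.2^2)) := by
  have hu2 := normsq_pos hu
  have hv2 := normsq_pos hv
  have hnu : 0 < Real.sqrt (u.1^2+u.2^2) := Real.sqrt_pos.mpr hu2
  have hnv : 0 < Real.sqrt (v.1^2+v.2^2) := Real.sqrt_pos.mpr hv2
  have hnu2 : (Real.sqrt (u.1^2+u.2^2))^2 = u.1^2+u.2^2 := Real.sq_sqrt (le_of_lt hu2)
  have hnv2 : (Real.sqrt (v.1^2+v.2^2))^2 = v.1^2+v.2^2 := Real.sq_sqrt (le_of_lt hv2)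
  set D := Real.sqrt (u.1^2+u.2^2) * Real.sqrt (v.1^2+v.2^2) with hD
  have hDpos : 0 < D := mul_pos hnu hnv
  have hcs : (u.1*v.1 + u.2*v.2)^2 ≤ D^2 := by
    have : D^2 = (u.1^2+u.2^2)*(v.1^2+v.2^2) := by
      rw [hD, mul_pow, hnu2, hnv2]
    rw [this]
    nlinarith [sq_nonneg (u.1*v.2 - u.2*v.1)]
  have hrange : -1 ≤ (u.1*v.1 + u.2*v.2)/D ∧ (u.1*v.1 + u.2*v.2)/D ≤ 1 := by
    constructor
    · rw [le_div_iff₀ hDpos]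
      nlinarith [abs_le_of_sq_le_sq' hcs (le_of_lt hDpos)]
    · rw [div_le_iff₀ hDpos]
      nlinarith [abs_le_of_sq_le_sq' hcs (le_of_lt hDpos)]
  unfold eangle at h
  have hval : (u.1*v.1 + u.2*v.2)/D = Real.cos (2*π/3) := by
    rw [← h, Real.cos_arccos hrange.1 hrange.2]
  rw [cos_two_pi_div_three] at hval
  have := div_eq_iff (ne_of_gt hDpos) |>.mp hval
  linarith [this]

lemma angle_rot {u v : ℝ × ℝ} (hu : u ≠ 0) (hv : v ≠ 0) (h : eangle u v = 2*π/3) :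
    ∃ ε : ℤ, (ε = 1 ∨ ε = -1) ∧ ∃ c : ℝ, 0 < c ∧
      v = c • rotA (-(1/2)) ((ε:ℝ) * (Real.sqrt 3/2)) u := by
  have hu2 := normsq_pos hu
  have hv2 := normsq_pos hv
  have hnu : 0 < Real.sqrt (u.1^2+u.2^2) := Real.sqrt_pos.mpr hu2
  have hnv : 0 < Real.sqrt (v.1^2+v.2^2) := Real.sqrt_pos.mpr hv2
  have hnu2 : (Real.sqrt (u.1^2+u.2^2))^2 = u.1^2+u.2^2 := Real.sq_sqrt (le_of_lt hu2)
  have hnv2 : (Real.sqrt (v.1^2+v.2^2))^2 = v.1^2+v.2^2 := Real.sq_sqrt (le_of_lt hv2)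
  have hdot := dot_of_eangle hu hv h
  have hs3 : (Real.sqrt 3)^2 = 3 := Real.sq_sqrt (by norm_num)
  have hcross : (u.1*v.2 - u.2*v.1) * (u.1*v.2 - u.2*v.1)
      = ((Real.sqrt 3/2) * (Real.sqrt (u.1^2+u.2^2) * Real.sqrt (v.1^2+v.2^2)))
        * ((Real.sqrt 3/2) * (Real.sqrt (u.1^2+u.2^2) * Real.sqrt (v.1^2+v.2^2))) := by
    have hd2 : (u.1*v.1+u.2*v.2)^2
        = (1/4)*((u.1^2+u.2^2)*(v.1^2+v.2^2)) := by
      rw [hdot, mul_pow, mul_pow, hnu2, hnv2]; ring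
    have hlag : (u.1*v.1+u.2*v.2)^2 + (u.1*v.2-u.2*v.1)^2
        = (u.1^2+u.2^2)*(v.1^2+v.2^2) := by ring
    have hcr : (u.1*v.2-u.2*v.1)^2 = (3/4)*((u.1^2+u.2^2)*(v.1^2+v.2^2)) := by
      linarith
    have hr2 : ((Real.sqrt 3/2) * (Real.sqrt (u.1^2+u.2^2) * Real.sqrt (v.1^2+v.2^2)))
        * ((Real.sqrt 3/2) * (Real.sqrt (u.1^2+u.2^2) * Real.sqrt (v.1^2+v.2^2)))
        = (3/4)*((u.1^2+u.2^2)*(v.1^2+v.2^2)) := by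
      have e : ((Real.sqrt 3/2) * (Real.sqrt (u.1^2+u.2^2) * Real.sqrt (v.1^2+v.2^2)))
          * ((Real.sqrt 3/2) * (Real.sqrt (u.1^2+u.2^2) * Real.sqrt (v.1^2+v.2^2)))
          = (Real.sqrt 3)^2/4 * ((Real.sqrt (u.1^2+u.2^2))^2 * (Real.sqrt (v.1^2+v.2^2))^2) := by
        ring
      rw [e, hs3, hnu2, hnv2]
    calc (u.1*v.2 - u.2*v.1) * (u.1*v.2 - u.2*v.1) = (u.1*v.2-u.2*v.1)^2 := by ring
      _ = (3/4)*((u.1^2+u.2^2)*(v.1^2+v.2^2)) := hcr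
      _ = _ := hr2.symm
  have key : (u.1^2+u.2^2) * v.1 = (u.1*v.1+u.2*v.2)*u.1 - (u.1*v.2-u.2*v.1)*u.2 := by ring
  have key2 : (u.1^2+u.2^2) * v.2 = (u.1*v.1+u.2*v.2)*u.2 + (u.1*v.2-u.2*v.1)*u.1 := by ring
  rcases mul_self_eq_mul_self_iff.mp hcross with h1 | h1
  · refine ⟨1, Or.inl rfl, Real.sqrt (v.1^2+v.2^2) / Real.sqrt (u.1^2+u.2^2),
      by positivity, ?_⟩
    unfold rotA
    apply Prod.ext
    · simp only [Prod.smul_fst, smul_eq_mul, Int.cast_one, one_mul]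
      rw [div_mul_eq_mul_div, eq_div_iff (ne_of_gt hnu)]
      apply mul_left_cancel₀ (ne_of_gt hnu)
      linear_combination v.1 * hnu2 + key + u.1 * hdot - u.2 * h1
    · simp only [Prod.smul_snd, smul_eq_mul, Int.cast_one, one_mul]
      rw [div_mul_eq_mul_div, eq_div_iff (ne_of_gt hnu)]
      apply mul_left_cancel₀ (ne_of_gt hnu)
      linear_combination v.2 * hnu2 + key2 + u.2 * hdot + u.1 * h1
  · refine ⟨-1, Or.inr rfl, Real.sqrt (v.1^2+v.2^2) / Real.sqrt (u.1^2+u.2^2),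
      by positivity, ?_⟩
    unfold rotA
    apply Prod.ext
    · simp only [Prod.smul_fst, smul_eq_mul, Int.cast_neg, Int.cast_one]
      rw [div_mul_eq_mul_div, eq_div_iff (ne_of_gt hnu)]
      apply mul_left_cancel₀ (ne_of_gt hnu)
      linear_combination v.1 * hnu2 + key + u.1 * hdot - u.2 * h1
    · simp only [Prod.smul_snd, smul_eq_mul, Int.cast_neg, Int.cast_one]
      rw [div_mul_eq_mul_div, eq_div_iff (ne_of_gt hnu)]
      apply mul_left_cancel₀ (ne_of_gt hnu)
      linear_combination v.2 * hnu2 + key2 + u.2 * hdot + u.1 * h1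

end angles

section shifts
variable {lam : ℕ} {r θ : ℝ}

lemma lfun_sum (γ τ d : ℝ) (hτ : Real.cos τ = -(1/2)) (y : ℝ × ℝ) :
    lfun (Real.cos γ) (Real.sin γ) d y + lfun (Real.cos (γ+τ)) (Real.sin (γ+τ)) d y
      + lfun (Real.cos (γ-τ)) (Real.sin (γ-τ)) d y = 0 := by
  have hnum : (y.1*Real.cos γ + y.2*Real.sin γ) + (y.1*Real.cos (γ+τ) + y.2*Real.sin (γ+τ))
      + (y.1*Real.cos (γ-τ) + y.2*Real.sin (γ-τ)) = 0 := by
    rw [Real.cos_add, Real.cos_sub, Real.sin_add, Real.sin_sub, hτ]; ring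
  rw [lfun_apply, lfun_apply, lfun_apply, ← add_div, ← add_div, hnum, zero_div]

lemma psiF_index (hlam : 3 ≤ lam) (k m : ℤ) :
    psiF lam r θ (k+m) = lfun (Real.cos ((θ + k*π/lam + π/(2*lam)) + (m:ℝ)*π/lam))
      (Real.sin ((θ + k*π/lam + π/(2*lam)) + (m:ℝ)*π/lam)) (r * Real.cos (π/(2*lam))) := by
  have hl : (lam:ℝ) ≠ 0 := by positivity
  unfold psiF
  have h : θ + ((k+m : ℤ):ℝ)*π/lam + π/(2*lam)
      = (θ + (k:ℝ)*π/lam + π/(2*lam)) + (m:ℝ)*π/lam := by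
    push_cast; field_simp; ring
  rw [h]

lemma phiF_index (hlam : 3 ≤ lam) (k m : ℤ) :
    phiF lam r θ (k+m) = lfun (Real.cos ((θ + k*π/lam) + (m:ℝ)*π/lam))
      (Real.sin ((θ + k*π/lam) + (m:ℝ)*π/lam)) r := by
  have hl : (lam:ℝ) ≠ 0 := by positivity
  unfold phiF
  have h : θ + ((k+m : ℤ):ℝ)*π/lam = (θ + (k:ℝ)*π/lam) + (m:ℝ)*π/lam := by
    push_cast; field_simp; ring
  rw [h]

lemma neg_index_angle (hlam : 3 ≤ lam) (γ : ℝ) (m : ℤ) :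
    γ + ((-m : ℤ):ℝ)*π/lam = γ - (m:ℝ)*π/lam := by
  push_cast; ring

lemma psiF_sum_zero (hlam : 3 ≤ lam) (hdvd : 3 ∣ lam) {ε : ℤ} (hε : ε = 1 ∨ ε = -1)
    (k : ℤ) (y : ℝ × ℝ) :
    psiF lam r θ k y + psiF lam r θ (k + ε*(2*(lam/3 : ℕ))) y
      + psiF lam r θ (k - ε*(2*(lam/3 : ℕ))) y = 0 := by
  have h1 := psiF_index (θ := θ) (r := r) hlam k (ε*(2*(lam/3 : ℕ)))
  have h2 := psiF_index (θ := θ) (r := r) hlam k (-(ε*(2*(lam/3 : ℕ))))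
  rw [show k - ε*(2*(lam/3 : ℕ)) = k + -(ε*(2*(lam/3 : ℕ))) by ring, h2, h1]
  rw [neg_index_angle hlam]
  have : psiF lam r θ k = lfun (Real.cos (θ + k*π/lam + π/(2*lam)))
      (Real.sin (θ + k*π/lam + π/(2*lam))) (r * Real.cos (π/(2*lam))) := rfl
  rw [this]
  exact lfun_sum _ _ _ (cos_m_angle hlam hdvd hε) y

lemma phiF_sum_zero (hlam : 3 ≤ lam) (hdvd : 3 ∣ lam) {ε : ℤ} (hε : ε = 1 ∨ ε = -1)
    (k : ℤ) (y : ℝ × ℝ) :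
    phiF lam r θ k y + phiF lam r θ (k + ε*(2*(lam/3 : ℕ))) y
      + phiF lam r θ (k - ε*(2*(lam/3 : ℕ))) y = 0 := by
  have h1 := phiF_index (θ := θ) (r := r) hlam k (ε*(2*(lam/3 : ℕ)))
  have h2 := phiF_index (θ := θ) (r := r) hlam k (-(ε*(2*(lam/3 : ℕ))))
  rw [show k - ε*(2*(lam/3 : ℕ)) = k + -(ε*(2*(lam/3 : ℕ))) by ring, h2, h1]
  rw [neg_index_angle hlam]
  have : phiF lam r θ k = lfun (Real.cos (θ + k*π/lam))
      (Real.sin (θ + k*π/lam)) r := rfl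
  rw [this]
  exact lfun_sum _ _ _ (cos_m_angle hlam hdvd hε) y

lemma det_W (j k' : ℤ) :
    (W lam r θ j).1*(W lam r θ k').2 - (W lam r θ j).2*(W lam r θ k').1
      = r^2 * Real.sin (((k':ℝ)-(j:ℝ))*π/lam) := by
  unfold W
  rw [show ((k':ℝ)-(j:ℝ))*π/lam = (θ+(k':ℝ)*π/lam) - (θ+(j:ℝ)*π/lam) by ring, Real.sin_sub]
  ring

lemma rotA_smul (cs sn t : ℝ) (u : ℝ × ℝ) :
    rotA cs sn (t • u) = t • rotA cs sn u := by
  unfold rotA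
  simp only [Prod.smul_fst, Prod.smul_snd, Prod.smul_mk, smul_eq_mul, Prod.mk.injEq]
  constructor <;> ring

end shifts

section cones

lemma coords_repr {g h : ℝ × ℝ} (hdet : g.1*h.2 - g.2*h.1 ≠ 0) (v : ℝ × ℝ) :
    v = ((v.1*h.2 - v.2*h.1)/(g.1*h.2 - g.2*h.1)) • g
      + ((g.1*v.2 - g.2*v.1)/(g.1*h.2 - g.2*h.1)) • h := by
  apply Prod.ext <;>
    (simp only [Prod.fst_add, Prod.snd_add, Prod.smul_fst, Prod.smul_snd, smul_eq_mul]) <;>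
    (rw [div_mul_eq_mul_div, div_mul_eq_mul_div, div_add_div _ _ hdet hdet, eq_div_iff (mul_ne_zero hdet hdet)]; ring)

lemma coords_combo₁ {g h : ℝ × ℝ} (hdet : g.1*h.2 - g.2*h.1 ≠ 0) (a b : ℝ) :
    ((a•g+b•h).1*h.2 - (a•g+b•h).2*h.1)/(g.1*h.2 - g.2*h.1) = a := by
  simp only [Prod.fst_add, Prod.snd_add, Prod.smul_fst, Prod.smul_snd, smul_eq_mul]
  rw [div_eq_iff hdet]; ring

lemma coords_combo₂ {g h : ℝ × ℝ} (hdet : g.1*h.2 - g.2*h.1 ≠ 0) (a b : ℝ) :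
    (g.1*(a•g+b•h).2 - g.2*(a•g+b•h).1)/(g.1*h.2 - g.2*h.1) = b := by
  simp only [Prod.fst_add, Prod.snd_add, Prod.smul_fst, Prod.smul_snd, smul_eq_mul]
  field_simp; ring

lemma cone_isOpen (g h : ℝ × ℝ) (D : ℝ) :
    IsOpen {v : ℝ × ℝ | 0 < (v.1*h.2 - v.2*h.1)/D ∧ 0 < (g.1*v.2 - g.2*v.1)/D} := by
  have e : {v : ℝ × ℝ | 0 < (v.1*h.2 - v.2*h.1)/D ∧ 0 < (g.1*v.2 - g.2*v.1)/D}
      = {v : ℝ × ℝ | 0 < (v.1*h.2 - v.2*h.1)/D} ∩ {v : ℝ × ℝ | 0 < (g.1*v.2 - g.2*v.1)/D} := rfl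
  rw [e]
  exact (isOpen_lt continuous_const (by fun_prop)).inter
    (isOpen_lt continuous_const (by fun_prop))

end cones

section ftgeneric
variable {lam : ℕ} {r θ : ℝ} {N : ℝ × ℝ → ℝ}

lemma ft_mem_iff (N : ℝ × ℝ → ℝ) (x₁ x₂ x₃ q : ℝ × ℝ) :
    q ∈ ftSetN N ![x₁, x₂, x₃] ↔ ∀ z : ℝ × ℝ,
      N (q-x₁) + N (q-x₂) + N (q-x₃) ≤ N (z-x₁) + N (z-x₂) + N (z-x₃) := by
  unfold ftSetN
  simp only [Set.mem_setOf_eq, Fin.sum_univ_three, Matrix.cons_val_zero, Matrix.cons_val_one,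
    Matrix.head_cons, Matrix.cons_val_two, Matrix.tail_cons]

lemma ft_convex (hN : IsNormOn N) (x₁ x₂ x₃ : ℝ × ℝ) :
    Convex ℝ (ftSetN N ![x₁, x₂, x₃]) := by
  intro q1 hq1 q2 hq2 a b ha hb hab
  rw [ft_mem_iff] at hq1 hq2 ⊢
  intro z
  have key : ∀ x : ℝ × ℝ, N (a•q1+b•q2 - x) ≤ a*N (q1-x) + b*N (q2-x) := by
    intro x
    have hx : a•x + b•x = x := by rw [← add_smul, hab, one_smul]
    have e : a•q1+b•q2 - x = a•(q1-x) + b•(q2-x) := by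
      calc a•q1+b•q2 - x = a•q1+b•q2 - (a•x+b•x) := by rw [hx]
        _ = a•(q1-x) + b•(q2-x) := by rw [smul_sub, smul_sub]; abel
    rw [e]
    calc N (a•(q1-x) + b•(q2-x)) ≤ N (a•(q1-x)) + N (b•(q2-x)) := hN.1 _ _
      _ = a*N (q1-x) + b*N (q2-x) := by rw [N_smul_nonneg hN ha, N_smul_nonneg hN hb]
  have h1 := mul_le_mul_of_nonneg_left (hq1 z) ha
  have h2 := mul_le_mul_of_nonneg_left (hq2 z) hb
  have k1 := key x₁
  have k2 := key x₂
  have k3 := key x₃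
  have hz1 : a * (N (z-x₁)+N (z-x₂)+N (z-x₃)) + b * (N (z-x₁)+N (z-x₂)+N (z-x₃))
      = N (z-x₁)+N (z-x₂)+N (z-x₃) := by rw [← add_mul, hab, one_mul]
  have hd1 : a*(N (q1-x₁)+N (q1-x₂)+N (q1-x₃))
      = a*N (q1-x₁)+a*N (q1-x₂)+a*N (q1-x₃) := by ring
  have hd2 : b*(N (q2-x₁)+N (q2-x₂)+N (q2-x₃))
      = b*N (q2-x₁)+b*N (q2-x₂)+b*N (q2-x₃) := by ring
  linarith

lemma N_continuous (hN : IsNormOn N) : Continuous N := by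
  have hK : 0 ≤ N (1,0) + N (0,1) := by
    have := N_nonneg hN (1,0)
    have := N_nonneg hN (0,1)
    linarith
  have hbound : ∀ y : ℝ × ℝ, N y ≤ (N (1,0) + N (0,1)) * ‖y‖ := by
    intro y
    have hdecomp : y = y.1 • ((1:ℝ),(0:ℝ)) + y.2 • ((0:ℝ),(1:ℝ)) := by
      apply Prod.ext <;> simp
    have h1 : N y ≤ N (y.1 • ((1:ℝ),(0:ℝ))) + N (y.2 • ((0:ℝ),(1:ℝ))) := by
      conv_lhs => rw [hdecomp]
      exact hN.1 _ _
    rw [hN.2.1, hN.2.1] at h1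
    have hy1 : |y.1| ≤ ‖y‖ := by
      have := norm_fst_le y
      rwa [Real.norm_eq_abs] at this
    have hy2 : |y.2| ≤ ‖y‖ := by
      have := norm_snd_le y
      rwa [Real.norm_eq_abs] at this
    have hn1 := N_nonneg hN ((1:ℝ),(0:ℝ))
    have hn2 := N_nonneg hN ((0:ℝ),(1:ℝ))
    nlinarith [abs_nonneg y.1, abs_nonneg y.2, norm_nonneg y]
  apply LipschitzWith.continuous (K := (N (1,0) + N (0,1)).toNNReal)
  apply LipschitzWith.of_dist_le_mul
  intro x y
  rw [Real.dist_eq, Real.coe_toNNReal _ hK, dist_eq_norm]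
  have h1 : N x ≤ N (x - y) + N y := by
    have := hN.1 (x - y) y
    simpa using this
  have h2 : N y ≤ N (x - y) + N x := by
    have := hN.1 (y - x) x
    rw [N_sub_comm hN y x] at this
    simpa using this
  have h3 := hbound (x - y)
  rw [abs_le]
  constructor <;> linarith

lemma norm_le_rN (hlam : 3 ≤ lam) (hr : 0 < r) (hN : IsNormOn N)
    (hball : {x : ℝ × ℝ | N x ≤ 1} = convexHull ℝ (Set.range (polyVerts lam r θ))) :
    ∀ v : ℝ × ℝ, ‖v‖ ≤ r * N v := by
  have hsub : convexHull ℝ (Set.range (polyVerts lam r θ)) ⊆ Metric.closedBall 0 r := by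
    apply convexHull_min
    · rintro _ ⟨j, rfl⟩
      have : polyVerts lam r θ j ∈ Set.range (W lam r θ) := by
        rw [← range_polyVerts_eq hlam]; exact ⟨j, rfl⟩
      obtain ⟨k, hk⟩ := this
      rw [← hk, mem_closedBall_zero_iff]
      unfold W
      rw [Prod.norm_def]
      apply sup_le <;>
        (rw [Real.norm_eq_abs, abs_mul, abs_of_pos hr]) <;>
        (nlinarith [Real.abs_cos_le_one (θ + (k:ℝ)*π/lam), Real.abs_sin_le_one (θ + (k:ℝ)*π/lam),
          abs_nonneg (Real.cos (θ + (k:ℝ)*π/lam)), abs_nonneg (Real.sin (θ + (k:ℝ)*π/lam))])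
    · exact convex_closedBall 0 r
  intro v
  rcases eq_or_ne v 0 with rfl | hv
  · simp [N_zero hN]
  · have hp : 0 < N v := N_pos hN hv
    have h1 : N ((N v)⁻¹ • v) ≤ 1 := by
      rw [N_smul_nonneg hN (by positivity), inv_mul_cancel₀ hp.ne']
    have h2 : (N v)⁻¹ • v ∈ convexHull ℝ (Set.range (polyVerts lam r θ)) := by
      rw [← hball]; exact h1
    have h3 := hsub h2
    rw [mem_closedBall_zero_iff, norm_smul, Real.norm_eq_abs,
      abs_of_pos (by positivity : (0:ℝ) < (N v)⁻¹)] at h3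
    calc ‖v‖ = N v * ((N v)⁻¹ * ‖v‖) := by field_simp
      _ ≤ N v * r := mul_le_mul_of_nonneg_left h3 (le_of_lt hp)
      _ = r * N v := mul_comm _ _

lemma ft_compact (hlam : 3 ≤ lam) (hr : 0 < r) (hN : IsNormOn N)
    (hball : {x : ℝ × ℝ | N x ≤ 1} = convexHull ℝ (Set.range (polyVerts lam r θ)))
    (x₁ x₂ x₃ : ℝ × ℝ) : IsCompact (ftSetN N ![x₁, x₂, x₃]) := by
  have hNc := N_continuous hN
  apply Metric.isCompact_of_isClosed_isBounded
  · have hrepr : ftSetN N ![x₁, x₂, x₃] = ⋂ z : ℝ × ℝ,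
        {q : ℝ × ℝ | N (q-x₁) + N (q-x₂) + N (q-x₃)
          ≤ N (z-x₁) + N (z-x₂) + N (z-x₃)} := by
      ext q
      rw [ft_mem_iff]
      simp [Set.mem_iInter]
    rw [hrepr]
    apply isClosed_iInter
    intro z
    apply isClosed_le _ continuous_const
    fun_prop
  · apply Bornology.IsBounded.subset (Metric.isBounded_closedBall
      (x := x₁) (r := r * (N (x₁-x₁) + N (x₁-x₂) + N (x₁-x₃))))
    intro q hq
    have h1 := (ft_mem_iff N x₁ x₂ x₃ q).mp hq x₁
    have h2 : N (q-x₁) ≤ N (x₁-x₁) + N (x₁-x₂) + N (x₁-x₃) := by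
      have := N_nonneg hN (q-x₂)
      have := N_nonneg hN (q-x₃)
      linarith
    have h3 := norm_le_rN hlam hr hN hball (q-x₁)
    rw [Metric.mem_closedBall, dist_eq_norm]
    calc ‖q - x₁‖ ≤ r * N (q-x₁) := h3
      _ ≤ r * (N (x₁-x₁) + N (x₁-x₂) + N (x₁-x₃)) :=
        mul_le_mul_of_nonneg_left h2 (le_of_lt hr)

end ftgeneric

end FTwork

open FTwork

/-- Let λ be divisible by 3, let x₁, x₂, x₃ be non-collinear points whose triangle has
all Euclidean angles less than 120°, and let p be the Torricelli point of the triangle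
(all angles ∠xᵢ p xⱼ equal 120°).  If none of the normalized vectors
x̂ᵢ = (xᵢ − p)/N(xᵢ − p) is a vertex of the 2λ-gon, then the Fermat–Torricelli set is a
non-degenerate convex polygon (compact, convex, with nonempty interior); if all the x̂ᵢ
are vertices of the 2λ-gon, then the Fermat–Torricelli set is {p}. -/
theorem lambda_plane_ft_of_torricelli_point
    (lam : ℕ) (hlam : 3 ≤ lam) (hdvd : 3 ∣ lam)
    (N : ℝ × ℝ → ℝ) (r θ : ℝ) (hr : 0 < r) (hN : IsNormOn N)
    (hball : {x : ℝ × ℝ | N x ≤ 1} = convexHull ℝ (Set.range (polyVerts lam r θ)))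
    (x₁ x₂ x₃ p : ℝ × ℝ)
    (hncol : ¬ Collinear ℝ ({x₁, x₂, x₃} : Set (ℝ × ℝ)))
    (hang₁ : eangle (x₂ - x₁) (x₃ - x₁) < 2 * π / 3)
    (hang₂ : eangle (x₁ - x₂) (x₃ - x₂) < 2 * π / 3)
    (hang₃ : eangle (x₁ - x₃) (x₂ - x₃) < 2 * π / 3)
    (hp₁₂ : eangle (x₁ - p) (x₂ - p) = 2 * π / 3)
    (hp₂₃ : eangle (x₂ - p) (x₃ - p) = 2 * π / 3)
    (hp₁₃ : eangle (x₁ - p) (x₃ - p) = 2 * π / 3) :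
    (((N (x₁ - p))⁻¹ • (x₁ - p) ∉ Set.range (polyVerts lam r θ) ∧
      (N (x₂ - p))⁻¹ • (x₂ - p) ∉ Set.range (polyVerts lam r θ) ∧
      (N (x₃ - p))⁻¹ • (x₃ - p) ∉ Set.range (polyVerts lam r θ) →
        IsCompact (ftSetN N ![x₁, x₂, x₃]) ∧ Convex ℝ (ftSetN N ![x₁, x₂, x₃]) ∧
          (interior (ftSetN N ![x₁, x₂, x₃])).Nonempty)) ∧
    ((N (x₁ - p))⁻¹ • (x₁ - p) ∈ Set.range (polyVerts lam r θ) ∧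
     (N (x₂ - p))⁻¹ • (x₂ - p) ∈ Set.range (polyVerts lam r θ) ∧
     (N (x₃ - p))⁻¹ • (x₃ - p) ∈ Set.range (polyVerts lam r θ) →
        ftSetN N ![x₁, x₂, x₃] = {p}) := by
  have hπ := Real.pi_pos
  have hu1 : x₁ - p ≠ 0 := by
    intro h; rw [h] at hp₁₂; exact eangle_ne_of_zero_left _ hp₁₂
  have hu2 : x₂ - p ≠ 0 := by
    intro h; rw [h] at hp₁₂; exact eangle_ne_of_zero_right _ hp₁₂
  have hu3 : x₃ - p ≠ 0 := by
    intro h; rw [h] at hp₂₃; exact eangle_ne_of_zero_right _ hp₂₃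
  have hN1 : 0 < N (x₁ - p) := N_pos hN hu1
  have hN2 : 0 < N (x₂ - p) := N_pos hN hu2
  have hN3 : 0 < N (x₃ - p) := N_pos hN hu3
  obtain ⟨ε, hε, c₂, hc₂, hu2eq⟩ := angle_rot hu1 hu2 hp₁₂
  obtain ⟨ε', hε', c₃, hc₃, hu3eq⟩ := angle_rot hu1 hu3 hp₁₃
  have hcontra : ∀ (s : ℝ) (c c' : ℝ), 0 < c → 0 < c' →
      x₂ - p = c • rotA (-(1/2)) s (x₁-p) → x₃ - p = c' • rotA (-(1/2)) s (x₁-p) → False := by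
    intro s c c' hc hc' h2 h3
    have hwne : rotA (-(1/2)) s (x₁-p) ≠ 0 := by
      intro h0; rw [h0, smul_zero] at h2; exact hu2 h2
    have hdotpos : (x₂-p).1*(x₃-p).1 + (x₂-p).2*(x₃-p).2
        = c*c'*((rotA (-(1/2)) s (x₁-p)).1^2+(rotA (-(1/2)) s (x₁-p)).2^2) := by
      rw [h2, h3]; simp only [Prod.smul_fst, Prod.smul_snd, smul_eq_mul]; ring
    have hd := dot_of_eangle hu2 hu3 hp₂₃
    have hs2 := normsq_pos hwne
    have hsp2 := Real.sqrt_pos.mpr (normsq_pos hu2)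
    have hsp3 := Real.sqrt_pos.mpr (normsq_pos hu3)
    nlinarith [mul_pos hc hc', mul_pos hsp2 hsp3]
  have hεne : ε' = -ε := by
    rcases hε with rfl | rfl <;> rcases hε' with rfl | rfl
    · exact (hcontra _ c₂ c₃ hc₂ hc₃ hu2eq hu3eq).elim
    · rfl
    · norm_num
    · exact (hcontra _ c₂ c₃ hc₂ hc₃ hu2eq hu3eq).elim
  subst hεne
  have hε'' : -ε = 1 ∨ -ε = -1 := by
    rcases hε with rfl | rfl
    · exact Or.inr rfl
    · exact Or.inl (by norm_num)
  -- relation between normalized vectors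
  have hN2c : N (x₂-p) = c₂ * N (x₁-p) := by
    rw [hu2eq, N_smul_nonneg hN hc₂.le, rot_N hlam hr hN hball hdvd hε]
  have hN3c : N (x₃-p) = c₃ * N (x₁-p) := by
    rw [hu3eq, N_smul_nonneg hN hc₃.le, rot_N hlam hr hN hball hdvd hε'']
  have hX2eq : (N (x₂-p))⁻¹ • (x₂-p)
      = rotA (-(1/2)) ((ε:ℝ)*(Real.sqrt 3/2)) ((N (x₁-p))⁻¹ • (x₁-p)) := by
    rw [hN2c, hu2eq, smul_smul, rotA_smul]
    congr 1
    rw [mul_inv]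
    field_simp
  have hX3eq : (N (x₃-p))⁻¹ • (x₃-p)
      = rotA (-(1/2)) (((-ε : ℤ):ℝ)*(Real.sqrt 3/2)) ((N (x₁-p))⁻¹ • (x₁-p)) := by
    rw [hN3c, hu3eq, smul_smul, rotA_smul]
    congr 1
    rw [mul_inv]
    field_simp
  have hX1ne : (N (x₁-p))⁻¹ • (x₁-p) ≠ 0 :=
    smul_ne_zero (inv_ne_zero hN1.ne') hu1
  have hNX1 : N ((N (x₁-p))⁻¹ • (x₁-p)) = 1 := by
    rw [N_smul_nonneg hN (by positivity), inv_mul_cancel₀ hN1.ne']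
  have hrec1 : x₁ - p = N (x₁-p) • ((N (x₁-p))⁻¹ • (x₁-p)) := by
    rw [smul_smul, mul_inv_cancel₀ hN1.ne', one_smul]
  have hrec2 : x₂ - p = N (x₂-p) • ((N (x₂-p))⁻¹ • (x₂-p)) := by
    rw [smul_smul, mul_inv_cancel₀ hN2.ne', one_smul]
  have hrec3 : x₃ - p = N (x₃-p) • ((N (x₃-p))⁻¹ • (x₃-p)) := by
    rw [smul_smul, mul_inv_cancel₀ hN3.ne', one_smul]
  -- the generic minimality criterion
  have hminkey : ∀ (L₁ L₂ L₃ : (ℝ×ℝ) →ₗ[ℝ] ℝ),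
      (∀ y, |L₁ y| ≤ N y) → (∀ y, |L₂ y| ≤ N y) → (∀ y, |L₃ y| ≤ N y) →
      (∀ y, L₁ y + L₂ y + L₃ y = 0) →
      ∀ q, L₁ (x₁-q) = N (x₁-q) → L₂ (x₂-q) = N (x₂-q) → L₃ (x₃-q) = N (x₃-q) →
      q ∈ ftSetN N ![x₁,x₂,x₃] := by
    intro L₁ L₂ L₃ hb₁ hb₂ hb₃ hsum q h1 h2 h3
    rw [ft_mem_iff]
    intro z
    have e1 : L₁ (x₁-z) = L₁ (x₁-q) + L₁ (q-z) := by rw [← map_add, sub_add_sub_cancel]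
    have e2 : L₂ (x₂-z) = L₂ (x₂-q) + L₂ (q-z) := by rw [← map_add, sub_add_sub_cancel]
    have e3 : L₃ (x₃-z) = L₃ (x₃-q) + L₃ (q-z) := by rw [← map_add, sub_add_sub_cancel]
    have i1 : L₁ (x₁-z) ≤ N (x₁-z) := le_trans (le_abs_self _) (hb₁ _)
    have i2 : L₂ (x₂-z) ≤ N (x₂-z) := le_trans (le_abs_self _) (hb₂ _)
    have i3 : L₃ (x₃-z) ≤ N (x₃-z) := le_trans (le_abs_self _) (hb₃ _)
    have hs := hsum (q-z)
    have c1 : N (z-x₁) = N (x₁-z) := N_sub_comm hN z x₁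
    have c2 : N (z-x₂) = N (x₂-z) := N_sub_comm hN z x₂
    have c3 : N (z-x₃) = N (x₃-z) := N_sub_comm hN z x₃
    have d1 : N (q-x₁) = N (x₁-q) := N_sub_comm hN q x₁
    have d2 : N (q-x₂) = N (x₂-q) := N_sub_comm hN q x₂
    have d3 : N (q-x₃) = N (x₃-q) := N_sub_comm hN q x₃
    linarith
  constructor
  · -- CASE A : no vertex
    rintro ⟨hnv₁, -, -⟩
    obtain ⟨k, a, b, ha, hb, hdec⟩ := decomp (θ := θ) hlam hr hX1ne
    have habsum : a + b = 1 := by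
      have h := N_cone (θ := θ) hlam hr hN hball k ha hb
      rw [← hdec] at h
      linarith [hNX1, h]
    have ha' : 0 < a := by
      rcases ha.lt_or_eq with h | h
      · exact h
      · exfalso
        apply hnv₁
        rw [range_polyVerts_eq hlam]
        refine ⟨k+1, ?_⟩
        rw [hdec, ← h, zero_smul, zero_add, show b = 1 by linarith, one_smul]
    have hb' : 0 < b := by
      rcases hb.lt_or_eq with h | h
      · exact h
      · exfalso
        apply hnv₁
        rw [range_polyVerts_eq hlam]
        refine ⟨k, ?_⟩
        rw [hdec, ← h, zero_smul, add_zero, show a = 1 by linarith, one_smul]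
    refine ⟨ft_compact hlam hr hN hball x₁ x₂ x₃, ft_convex hN x₁ x₂ x₃, ?_⟩
    -- the open cone neighbourhood of p
    have hsinpos : 0 < Real.sin (π/lam) := by
      apply Real.sin_pos_of_pos_of_lt_pi
      · positivity
      · rw [div_lt_iff₀ (by positivity : (0:ℝ) < (lam:ℝ))]
        have h3 : (3:ℝ) ≤ (lam:ℝ) := by exact_mod_cast hlam
        nlinarith
    have hDpos : 0 < r^2 * Real.sin (π/lam) := by positivity
    have hdet : ∀ j : ℤ, (W lam r θ j).1*(W lam r θ (j+1)).2
        - (W lam r θ j).2*(W lam r θ (j+1)).1 = r^2 * Real.sin (π/lam) := by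
      intro j
      rw [det_W, show ((j+1:ℤ):ℝ) - (j:ℝ) = 1 by push_cast; ring, one_mul]
    have hdetne : ∀ j : ℤ, (W lam r θ j).1*(W lam r θ (j+1)).2
        - (W lam r θ j).2*(W lam r θ (j+1)).1 ≠ 0 := fun j => by rw [hdet j]; exact hDpos.ne'
    have hcone_eq : ∀ (j : ℤ) (v : ℝ×ℝ),
        0 < (v.1*(W lam r θ (j+1)).2 - v.2*(W lam r θ (j+1)).1)/(r^2 * Real.sin (π/lam)) →
        0 < ((W lam r θ j).1*v.2 - (W lam r θ j).2*v.1)/(r^2 * Real.sin (π/lam)) →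
        psiF lam r θ j v = N v := by
      intro j v h1 h2
      rw [← hdet j] at h1 h2
      have hv := coords_repr (hdetne j) v
      rw [hv, map_add, map_smul, map_smul, psiF_W_self hlam hr, psiF_W_succ hlam hr,
        N_cone hlam hr hN hball j h1.le h2.le, smul_eq_mul, smul_eq_mul, mul_one, mul_one]
    -- decompositions of the three directions
    have hX2dec : (N (x₂-p))⁻¹ • (x₂-p)
        = a • W lam r θ (k + ε*(2*(lam/3:ℕ))) + b • W lam r θ (k + ε*(2*(lam/3:ℕ)) + 1) := by
      rw [hX2eq, hdec, rotA_smul_add, rot_W hlam hdvd hε, rot_W hlam hdvd hε,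
        show k+1+ε*(2*(lam/3:ℕ)) = k + ε*(2*(lam/3:ℕ)) + 1 by ring]
    have hX3dec : (N (x₃-p))⁻¹ • (x₃-p)
        = a • W lam r θ (k - ε*(2*(lam/3:ℕ))) + b • W lam r θ (k - ε*(2*(lam/3:ℕ)) + 1) := by
      rw [hX3eq, hdec, rotA_smul_add, rot_W hlam hdvd hε'', rot_W hlam hdvd hε'',
        show k + -ε*(2*(lam/3:ℕ)) = k - ε*(2*(lam/3:ℕ)) by ring,
        show k+1+ -ε*(2*(lam/3:ℕ)) = k - ε*(2*(lam/3:ℕ)) + 1 by ring]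
    have hx1p : x₁ - p = (N (x₁-p)*a) • W lam r θ k + (N (x₁-p)*b) • W lam r θ (k+1) := by
      calc x₁ - p = N (x₁-p) • ((N (x₁-p))⁻¹ • (x₁-p)) := hrec1
        _ = N (x₁-p) • (a • W lam r θ k + b • W lam r θ (k+1)) := by rw [hdec]
        _ = _ := by rw [smul_add, smul_smul, smul_smul]
    have hx2p : x₂ - p = (N (x₂-p)*a) • W lam r θ (k + ε*(2*(lam/3:ℕ)))
        + (N (x₂-p)*b) • W lam r θ (k + ε*(2*(lam/3:ℕ)) + 1) := by
      calc x₂ - p = N (x₂-p) • ((N (x₂-p))⁻¹ • (x₂-p)) := hrec2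
        _ = N (x₂-p) • (a • W lam r θ (k + ε*(2*(lam/3:ℕ)))
            + b • W lam r θ (k + ε*(2*(lam/3:ℕ)) + 1)) := by rw [hX2dec]
        _ = _ := by rw [smul_add, smul_smul, smul_smul]
    have hx3p : x₃ - p = (N (x₃-p)*a) • W lam r θ (k - ε*(2*(lam/3:ℕ)))
        + (N (x₃-p)*b) • W lam r θ (k - ε*(2*(lam/3:ℕ)) + 1) := by
      calc x₃ - p = N (x₃-p) • ((N (x₃-p))⁻¹ • (x₃-p)) := hrec3
        _ = N (x₃-p) • (a • W lam r θ (k - ε*(2*(lam/3:ℕ)))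
            + b • W lam r θ (k - ε*(2*(lam/3:ℕ)) + 1)) := by rw [hX3dec]
        _ = _ := by rw [smul_add, smul_smul, smul_smul]
    -- the three open sets
    set D := r^2 * Real.sin (π/lam) with hDdef
    have hQsub : ((fun q : ℝ×ℝ => x₁ - q) ⁻¹' {v : ℝ×ℝ |
          0 < (v.1*(W lam r θ (k+1)).2 - v.2*(W lam r θ (k+1)).1)/D ∧
          0 < ((W lam r θ k).1*v.2 - (W lam r θ k).2*v.1)/D}) ∩
        ((fun q : ℝ×ℝ => x₂ - q) ⁻¹' {v : ℝ×ℝ |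
          0 < (v.1*(W lam r θ (k + ε*(2*(lam/3:ℕ)) + 1)).2
            - v.2*(W lam r θ (k + ε*(2*(lam/3:ℕ)) + 1)).1)/D ∧
          0 < ((W lam r θ (k + ε*(2*(lam/3:ℕ)))).1*v.2
            - (W lam r θ (k + ε*(2*(lam/3:ℕ)))).2*v.1)/D}) ∩
        ((fun q : ℝ×ℝ => x₃ - q) ⁻¹' {v : ℝ×ℝ |
          0 < (v.1*(W lam r θ (k - ε*(2*(lam/3:ℕ)) + 1)).2
            - v.2*(W lam r θ (k - ε*(2*(lam/3:ℕ)) + 1)).1)/D ∧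
          0 < ((W lam r θ (k - ε*(2*(lam/3:ℕ)))).1*v.2
            - (W lam r θ (k - ε*(2*(lam/3:ℕ)))).2*v.1)/D})
        ⊆ ftSetN N ![x₁,x₂,x₃] := by
      rintro q ⟨⟨hm1, hm2⟩, hm3⟩
      refine hminkey (psiF lam r θ k) (psiF lam r θ (k + ε*(2*(lam/3:ℕ))))
        (psiF lam r θ (k - ε*(2*(lam/3:ℕ))))
        (abs_le_N hN _ (le_one_on_ball hlam hN hball _ (psiF_W_le_one hlam hr _)))
        (abs_le_N hN _ (le_one_on_ball hlam hN hball _ (psiF_W_le_one hlam hr _)))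
        (abs_le_N hN _ (le_one_on_ball hlam hN hball _ (psiF_W_le_one hlam hr _)))
        (psiF_sum_zero hlam hdvd hε k) q ?_ ?_ ?_
      · exact hcone_eq k _ hm1.1 hm1.2
      · exact hcone_eq _ _ hm2.1 hm2.2
      · exact hcone_eq _ _ hm3.1 hm3.2
    have hQopen : IsOpen (((fun q : ℝ×ℝ => x₁ - q) ⁻¹' {v : ℝ×ℝ |
          0 < (v.1*(W lam r θ (k+1)).2 - v.2*(W lam r θ (k+1)).1)/D ∧
          0 < ((W lam r θ k).1*v.2 - (W lam r θ k).2*v.1)/D}) ∩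
        ((fun q : ℝ×ℝ => x₂ - q) ⁻¹' {v : ℝ×ℝ |
          0 < (v.1*(W lam r θ (k + ε*(2*(lam/3:ℕ)) + 1)).2
            - v.2*(W lam r θ (k + ε*(2*(lam/3:ℕ)) + 1)).1)/D ∧
          0 < ((W lam r θ (k + ε*(2*(lam/3:ℕ)))).1*v.2
            - (W lam r θ (k + ε*(2*(lam/3:ℕ)))).2*v.1)/D}) ∩
        ((fun q : ℝ×ℝ => x₃ - q) ⁻¹' {v : ℝ×ℝ |
          0 < (v.1*(W lam r θ (k - ε*(2*(lam/3:ℕ)) + 1)).2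
            - v.2*(W lam r θ (k - ε*(2*(lam/3:ℕ)) + 1)).1)/D ∧
          0 < ((W lam r θ (k - ε*(2*(lam/3:ℕ)))).1*v.2
            - (W lam r θ (k - ε*(2*(lam/3:ℕ)))).2*v.1)/D})) := by
      refine IsOpen.inter (IsOpen.inter ?_ ?_) ?_ <;>
        exact (cone_isOpen _ _ _).preimage (by fun_prop)
    have hpmem : p ∈ ((fun q : ℝ×ℝ => x₁ - q) ⁻¹' {v : ℝ×ℝ |
          0 < (v.1*(W lam r θ (k+1)).2 - v.2*(W lam r θ (k+1)).1)/D ∧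
          0 < ((W lam r θ k).1*v.2 - (W lam r θ k).2*v.1)/D}) ∩
        ((fun q : ℝ×ℝ => x₂ - q) ⁻¹' {v : ℝ×ℝ |
          0 < (v.1*(W lam r θ (k + ε*(2*(lam/3:ℕ)) + 1)).2
            - v.2*(W lam r θ (k + ε*(2*(lam/3:ℕ)) + 1)).1)/D ∧
          0 < ((W lam r θ (k + ε*(2*(lam/3:ℕ)))).1*v.2
            - (W lam r θ (k + ε*(2*(lam/3:ℕ)))).2*v.1)/D}) ∩
        ((fun q : ℝ×ℝ => x₃ - q) ⁻¹' {v : ℝ×ℝ |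
          0 < (v.1*(W lam r θ (k - ε*(2*(lam/3:ℕ)) + 1)).2
            - v.2*(W lam r θ (k - ε*(2*(lam/3:ℕ)) + 1)).1)/D ∧
          0 < ((W lam r θ (k - ε*(2*(lam/3:ℕ)))).1*v.2
            - (W lam r θ (k - ε*(2*(lam/3:ℕ)))).2*v.1)/D}) := by
      refine ⟨⟨?_, ?_⟩, ?_⟩
      · simp only [Set.mem_preimage, Set.mem_setOf_eq]
        constructor
        · rw [hx1p, ← hdet k, coords_combo₁ (hdetne k)]
          positivity
        · rw [hx1p, ← hdet k, coords_combo₂ (hdetne k)]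
          positivity
      · simp only [Set.mem_preimage, Set.mem_setOf_eq]
        constructor
        · rw [hx2p, ← hdet (k + ε*(2*(lam/3:ℕ))), coords_combo₁ (hdetne _)]
          positivity
        · rw [hx2p, ← hdet (k + ε*(2*(lam/3:ℕ))), coords_combo₂ (hdetne _)]
          positivity
      · simp only [Set.mem_preimage, Set.mem_setOf_eq]
        constructor
        · rw [hx3p, ← hdet (k - ε*(2*(lam/3:ℕ))), coords_combo₁ (hdetne _)]
          positivity
        · rw [hx3p, ← hdet (k - ε*(2*(lam/3:ℕ))), coords_combo₂ (hdetne _)]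
          positivity
    exact ⟨p, (hQopen.subset_interior_iff.mpr hQsub) hpmem⟩
  · -- CASE B : vertices
    rintro ⟨hv₁, -, -⟩
    rw [range_polyVerts_eq hlam] at hv₁
    obtain ⟨k, hk⟩ := hv₁
    have hX2v : (N (x₂-p))⁻¹ • (x₂-p) = W lam r θ (k + ε*(2*(lam/3:ℕ))) := by
      rw [hX2eq, ← hk, rot_W hlam hdvd hε]
    have hX3v : (N (x₃-p))⁻¹ • (x₃-p) = W lam r θ (k - ε*(2*(lam/3:ℕ))) := by
      rw [hX3eq, ← hk, rot_W hlam hdvd hε'',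
        show k + -ε*(2*(lam/3:ℕ)) = k - ε*(2*(lam/3:ℕ)) by ring]
    have hx1p : x₁ - p = N (x₁-p) • W lam r θ k := by
      calc x₁ - p = N (x₁-p) • ((N (x₁-p))⁻¹ • (x₁-p)) := hrec1
        _ = N (x₁-p) • W lam r θ k := by rw [← hk]
    have hx2p : x₂ - p = N (x₂-p) • W lam r θ (k + ε*(2*(lam/3:ℕ))) := by
      calc x₂ - p = N (x₂-p) • ((N (x₂-p))⁻¹ • (x₂-p)) := hrec2
        _ = N (x₂-p) • W lam r θ (k + ε*(2*(lam/3:ℕ))) := by rw [hX2v]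
    have hx3p : x₃ - p = N (x₃-p) • W lam r θ (k - ε*(2*(lam/3:ℕ))) := by
      calc x₃ - p = N (x₃-p) • ((N (x₃-p))⁻¹ • (x₃-p)) := hrec3
        _ = N (x₃-p) • W lam r θ (k - ε*(2*(lam/3:ℕ))) := by rw [hX3v]
    have hn1 : phiF lam r θ k (x₁-p) = N (x₁-p) := by
      rw [hx1p, map_smul, phiF_W_self hlam hr, smul_eq_mul, mul_one,
        N_smul_nonneg hN hN1.le, N_W hlam hr hN hball, mul_one]
    have hn2 : phiF lam r θ (k + ε*(2*(lam/3:ℕ))) (x₂-p) = N (x₂-p) := by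
      rw [hx2p, map_smul, phiF_W_self hlam hr, smul_eq_mul, mul_one,
        N_smul_nonneg hN hN2.le, N_W hlam hr hN hball, mul_one]
    have hn3 : phiF lam r θ (k - ε*(2*(lam/3:ℕ))) (x₃-p) = N (x₃-p) := by
      rw [hx3p, map_smul, phiF_W_self hlam hr, smul_eq_mul, mul_one,
        N_smul_nonneg hN hN3.le, N_W hlam hr hN hball, mul_one]
    have habs1 : ∀ y, |phiF lam r θ k y| ≤ N y :=
      abs_le_N hN _ (le_one_on_ball hlam hN hball _ (phiF_W_le_one hlam hr _))
    have habs2 : ∀ y, |phiF lam r θ (k + ε*(2*(lam/3:ℕ))) y| ≤ N y :=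
      abs_le_N hN _ (le_one_on_ball hlam hN hball _ (phiF_W_le_one hlam hr _))
    have habs3 : ∀ y, |phiF lam r θ (k - ε*(2*(lam/3:ℕ))) y| ≤ N y :=
      abs_le_N hN _ (le_one_on_ball hlam hN hball _ (phiF_W_le_one hlam hr _))
    have hpft : p ∈ ftSetN N ![x₁,x₂,x₃] :=
      hminkey _ _ _ habs1 habs2 habs3 (phiF_sum_zero hlam hdvd hε k) p hn1 hn2 hn3
    apply Set.eq_singleton_iff_unique_mem.mpr
    refine ⟨hpft, ?_⟩
    intro q hq
    have hfq := (ft_mem_iff N x₁ x₂ x₃ q).mp hq p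
    have hfp := (ft_mem_iff N x₁ x₂ x₃ p).mp hpft q
    have hb1 : phiF lam r θ k (x₁-q) ≤ N (x₁-q) := le_trans (le_abs_self _) (habs1 _)
    have hb2 : phiF lam r θ (k + ε*(2*(lam/3:ℕ))) (x₂-q) ≤ N (x₂-q) :=
      le_trans (le_abs_self _) (habs2 _)
    have hb3 : phiF lam r θ (k - ε*(2*(lam/3:ℕ))) (x₃-q) ≤ N (x₃-q) :=
      le_trans (le_abs_self _) (habs3 _)
    have hsum := phiF_sum_zero (θ := θ) (r := r) hlam hdvd hε k (p-q)
    have e1 : phiF lam r θ k (x₁-q) = phiF lam r θ k (x₁-p) + phiF lam r θ k (p-q) := by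
      rw [← map_add, sub_add_sub_cancel]
    have e2 : phiF lam r θ (k + ε*(2*(lam/3:ℕ))) (x₂-q)
        = phiF lam r θ (k + ε*(2*(lam/3:ℕ))) (x₂-p)
          + phiF lam r θ (k + ε*(2*(lam/3:ℕ))) (p-q) := by
      rw [← map_add, sub_add_sub_cancel]
    have e3 : phiF lam r θ (k - ε*(2*(lam/3:ℕ))) (x₃-q)
        = phiF lam r θ (k - ε*(2*(lam/3:ℕ))) (x₃-p)
          + phiF lam r θ (k - ε*(2*(lam/3:ℕ))) (p-q) := by
      rw [← map_add, sub_add_sub_cancel]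
    have d1 : N (q-x₁) = N (x₁-q) := N_sub_comm hN q x₁
    have d2 : N (q-x₂) = N (x₂-q) := N_sub_comm hN q x₂
    have d3 : N (q-x₃) = N (x₃-q) := N_sub_comm hN q x₃
    have dp1 : N (p-x₁) = N (x₁-p) := N_sub_comm hN p x₁
    have dp2 : N (p-x₂) = N (x₂-p) := N_sub_comm hN p x₂
    have dp3 : N (p-x₃) = N (x₃-p) := N_sub_comm hN p x₃
    have heq1 : phiF lam r θ k (x₁-q) = N (x₁-q) := by linarith
    have heq2 : phiF lam r θ (k + ε*(2*(lam/3:ℕ))) (x₂-q) = N (x₂-q) := by linarith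
    have hr1 := vertex_ray hlam hr hN hball k heq1
    have hr2 := vertex_ray hlam hr hN hball (k + ε*(2*(lam/3:ℕ))) heq2
    have hqp1 : q - p = (N (x₁-p) - N (x₁-q)) • W lam r θ k := by
      rw [sub_smul, ← hx1p, ← hr1]; abel
    have hqp2 : q - p = (N (x₂-p) - N (x₂-q)) • W lam r θ (k + ε*(2*(lam/3:ℕ))) := by
      rw [sub_smul, ← hx2p, ← hr2]; abel
    have hdetv : (W lam r θ k).1*(W lam r θ (k + ε*(2*(lam/3:ℕ)))).2
        - (W lam r θ k).2*(W lam r θ (k + ε*(2*(lam/3:ℕ)))).1 ≠ 0 := by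
      rw [det_W, show ((k + ε*(2*(lam/3:ℕ)) : ℤ):ℝ) - (k:ℝ)
        = ((ε*(2*(lam/3:ℕ)) : ℤ):ℝ) by push_cast; ring, sin_m_angle hlam hdvd hε]
      have hs3 : (0:ℝ) < Real.sqrt 3 := Real.sqrt_pos.mpr (by norm_num)
      have hεne0 : (ε:ℝ) ≠ 0 := by rcases hε with rfl | rfl <;> norm_num
      have : (ε:ℝ) * (Real.sqrt 3/2) ≠ 0 := mul_ne_zero hεne0 (by positivity)
      exact mul_ne_zero (by positivity) this
    have hcc : (N (x₁-p) - N (x₁-q)) • W lam r θ k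
        = (N (x₂-p) - N (x₂-q)) • W lam r θ (k + ε*(2*(lam/3:ℕ))) := by
      rw [← hqp1, ← hqp2]
    have hc1 : (N (x₁-p) - N (x₁-q)) * (W lam r θ k).1
        = (N (x₂-p) - N (x₂-q)) * (W lam r θ (k + ε*(2*(lam/3:ℕ)))).1 := by
      have h := congrArg Prod.fst hcc
      simp only [Prod.smul_fst, smul_eq_mul] at h
      exact h
    have hc2 : (N (x₁-p) - N (x₁-q)) * (W lam r θ k).2
        = (N (x₂-p) - N (x₂-q)) * (W lam r θ (k + ε*(2*(lam/3:ℕ)))).2 := by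
      have h := congrArg Prod.snd hcc
      simp only [Prod.smul_snd, smul_eq_mul] at h
      exact h
    have hzero : (N (x₁-p) - N (x₁-q))
        * ((W lam r θ k).1*(W lam r θ (k + ε*(2*(lam/3:ℕ)))).2
          - (W lam r θ k).2*(W lam r θ (k + ε*(2*(lam/3:ℕ)))).1) = 0 := by
      linear_combination hc1 * (W lam r θ (k + ε*(2*(lam/3:ℕ)))).2
        - hc2 * (W lam r θ (k + ε*(2*(lam/3:ℕ)))).1
    have hcoeff : N (x₁-p) - N (x₁-q) = 0 := by
      rcases mul_eq_zero.mp hzero with h | h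
      · exact h
      · exact absurd h hdetv
    have : q - p = 0 := by rw [hqp1, hcoeff, zero_smul]
    exact sub_eq_zero.mp this
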